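/- arXiv:math/9912147 — 2 statements merged into one kernel-verified Lean document; each statement's English description precedes it below -/
import Mathlib

section
/- Let 1 ≤ N ≤ s be integers, let A = {1, …, N} ⊆ {1, …, s}, and let ρ be a permutation of {1, …, s} such that the union of the forward ρ-orbits of the elements of A is all of {1, …, s} (i.e. ρ ∈ 𝔖_{s;N}). Let ρ̃ be the first-return permutation of A, ρ̃(i) = ρ^{s_i}(i) where s_i = min{m > 0 : ρ^m(i) ∈ A}. Then the signs satisfy sgn(ρ) = (−1)^{s−N} · sgn(ρ̃); equivalently, sgn(ρ) ≡ sgn(ρ̃) + (s − N) modulo 2, where sgn is counted additively mod 2. -/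
/-!
STATEMENT 6: for `ρ ∈ 𝔖_{s;N}` (forward ρ-orbits of `A = {1,…,N}` cover `{1,…,s}`) with
first-return permutation `ρ̃` of `A`, the signs satisfy `sgn(ρ) = (−1)^{s−N} · sgn(ρ̃)`.
We model `{1,…,s}` as `Fin s`, `A` as the image of `Fin.castLE : Fin N → Fin s`, and `ρ̃`
as a permutation of `Fin N`.
-/

open Equiv Equiv.Perm

/-- The setoid of "same cycle" for a permutation. -/
def sfrScs {α : Type*} (σ : Equiv.Perm α) : Setoid α :=
  ⟨σ.SameCycle, ⟨Equiv.Perm.SameCycle.refl σ, fun h => h.symm, fun h h' => h.trans h'⟩⟩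

lemma sfr_card_classes {α : Type*} [Fintype α] [DecidableEq α] (σ : Equiv.Perm α) :
    Nat.card (Quotient (sfrScs σ)) =
      (Fintype.card α - σ.support.card) + σ.cycleFactorsFinset.card := by
  classical
  have e : Quotient (sfrScs σ) ≃ ({x : α // σ x = x} ⊕ {c // c ∈ σ.cycleFactorsFinset}) := by
    refine Equiv.ofBijective
      (Quotient.lift (fun x =>
        if h : σ x = x then Sum.inl ⟨x, h⟩
        else Sum.inr ⟨σ.cycleOf x,
          cycleOf_mem_cycleFactorsFinset_iff.mpr (mem_support.mpr h)⟩) ?_) ⟨?_, ?_⟩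
    · intro x y hxy
      have hxy' : σ.SameCycle x y := hxy
      by_cases hx : σ x = x
      · have hyx : y = x := by
          obtain ⟨z, hz⟩ := hxy'
          rw [← hz, zpow_apply_eq_self_of_apply_eq_self hx]
        subst hyx; rfl
      · have hy : ¬ σ y = y := by
          intro hy
          obtain ⟨z, hz⟩ := hxy'.symm
          have hxy2 : x = y := by rw [← hz, zpow_apply_eq_self_of_apply_eq_self hy]
          exact hx (by rw [hxy2]; exact hy)
        simp only [dif_neg hx, dif_neg hy]
        exact congrArg _ (Subtype.ext hxy'.cycleOf_eq)
    · refine Quotient.ind₂ ?_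
      intro x y h
      rcases Classical.em (σ x = x) with hx | hx <;> rcases Classical.em (σ y = y) with hy | hy
      · simp only [Quotient.lift_mk, dif_pos hx, dif_pos hy, Sum.inl.injEq,
          Subtype.mk.injEq] at h
        subst h; exact Quotient.sound (Equiv.Perm.SameCycle.refl σ x)
      · simp only [Quotient.lift_mk, dif_pos hx, dif_neg hy] at h
        exact absurd h (by simp)
      · simp only [Quotient.lift_mk, dif_neg hx, dif_pos hy] at h
        exact absurd h (by simp)
      · simp only [Quotient.lift_mk, dif_neg hx, dif_neg hy, Sum.inr.injEq,
          Subtype.mk.injEq] at h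
        have hysup : y ∈ (σ.cycleOf y).support :=
          mem_support.mpr (by rw [cycleOf_apply_self]; exact hy)
        rw [← h] at hysup
        exact Quotient.sound (mem_support_cycleOf_iff.mp hysup).1
    · rintro (⟨x, hx⟩ | ⟨c, hc⟩)
      · exact ⟨Quotient.mk _ x, by simp [dif_pos hx]⟩
      · have hcyc := (mem_cycleFactorsFinset_iff.mp hc).1
        obtain ⟨x, hxc⟩ := hcyc.nonempty_support
        have hσx : σ x ≠ x := by
          have := (mem_cycleFactorsFinset_iff.mp hc).2 x hxc
          rw [← this]; exact mem_support.mp hxc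
        refine ⟨Quotient.mk _ x, ?_⟩
        rw [Quotient.lift_mk, dif_neg hσx]
        exact congrArg _ (Subtype.ext (cycle_is_cycleOf hxc hc).symm)
  rw [Nat.card_congr e, Nat.card_sum]
  congr 1
  · rw [Nat.card_eq_fintype_card, Fintype.card_subtype]
    have : (Finset.univ.filter fun x => σ x = x) = σ.supportᶜ := by
      ext x; simp [mem_support]
    rw [this, Finset.card_compl]
  · rw [Nat.card_eq_fintype_card, Fintype.card_coe]

lemma sfr_sign_eq {α : Type*} [Fintype α] [DecidableEq α] (σ : Equiv.Perm α) :
    Equiv.Perm.sign σ = (-1 : ℤˣ) ^ (Fintype.card α + Nat.card (Quotient (sfrScs σ))) := by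
  rw [sign_of_cycleType, sfr_card_classes, sum_cycleType]
  have hcard : Multiset.card σ.cycleType = σ.cycleFactorsFinset.card := by
    simp [Equiv.Perm.cycleType]
  rw [hcard]
  have hs : σ.support.card ≤ Fintype.card α := by
    rw [← Finset.card_univ]; exact Finset.card_le_univ _
  have : Fintype.card α + ((Fintype.card α - σ.support.card) + σ.cycleFactorsFinset.card)
      = (σ.support.card + σ.cycleFactorsFinset.card)
        + 2 * (Fintype.card α - σ.support.card) := by omega
  conv_rhs => rw [this, pow_add, pow_mul]
  norm_num

theorem sign_first_return_perm
    (s N : ℕ) (h1 : 1 ≤ N) (hNs : N ≤ s)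
    (ρ : Equiv.Perm (Fin s))
    -- ρ ∈ 𝔖_{s;N}:
    (horb : ∀ x : Fin s, ∃ i : Fin N, ∃ m : ℕ, (ρ ^ m) (Fin.castLE hNs i) = x)
    -- first return times:
    (sret : Fin N → ℕ)
    (hsret : ∀ i : Fin N,
      sret i = sInf {m : ℕ | 0 < m ∧ ((ρ ^ m) (Fin.castLE hNs i)).val < N})
    -- the first-return permutation ρ̃ of A:
    (ρt : Equiv.Perm (Fin N))
    (hρt : ∀ i : Fin N, (Fin.castLE hNs (ρt i) : Fin s) = (ρ ^ sret i) (Fin.castLE hNs i)) :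
    Equiv.Perm.sign ρ = (-1 : ℤˣ) ^ (s - N) * Equiv.Perm.sign ρt := by
  classical
  set cst : Fin N → Fin s := Fin.castLE hNs with hcst
  -- the return-time set is nonempty, so `sret i` is a genuine return time
  have hret : ∀ i : Fin N, 0 < sret i ∧ ((ρ ^ sret i) (cst i)).val < N := by
    intro i
    have hne : {m : ℕ | 0 < m ∧ ((ρ ^ m) (cst i)).val < N}.Nonempty := by
      refine ⟨orderOf ρ, orderOf_pos ρ, ?_⟩
      rw [pow_orderOf_eq_one]
      exact i.isLt
    have := Nat.sInf_mem hne
    rwa [← hsret i] at this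
  -- key lemma: same ρ-cycle elements of A are in the same ρ̃-cycle
  have L : ∀ k : ℕ, ∀ i j : Fin N, (ρ ^ k) (cst i) = cst j → ρt.SameCycle i j := by
    intro k
    induction k using Nat.strong_induction_on with
    | _ k IH =>
      intro i j hk
      rcases Nat.eq_zero_or_pos k with rfl | hkpos
      · have h0 : cst i = cst j := by simpa using hk
        have : i = j := Fin.castLE_injective hNs h0
        subst this; exact Equiv.Perm.SameCycle.refl _ _
      · have hmem : k ∈ {m : ℕ | 0 < m ∧ ((ρ ^ m) (cst i)).val < N} :=
          ⟨hkpos, by rw [hk]; exact j.isLt⟩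
        have hle : sret i ≤ k := by rw [hsret i]; exact Nat.sInf_le hmem
        have hlt : k - sret i < k := Nat.sub_lt hkpos (hret i).1
        have hstep : (ρ ^ (k - sret i)) (cst (ρt i)) = cst j := by
          rw [hρt i, ← Equiv.Perm.mul_apply, ← pow_add, Nat.sub_add_cancel hle]
          exact hk
        exact Equiv.Perm.SameCycle.trans ⟨1, by simp⟩ (IH _ hlt _ _ hstep)
  have L' : ∀ i j : Fin N, ρ.SameCycle (cst i) (cst j) → ρt.SameCycle i j := by
    intro i j h
    obtain ⟨k, -, hk⟩ := h.exists_pow_eq'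
    exact L k i j hk
  -- converse direction
  have M0 : ∀ (k : ℕ) (i : Fin N), ρ.SameCycle (cst i) (cst ((ρt ^ k) i)) := by
    intro k i
    induction k with
    | zero => simpa using Equiv.Perm.SameCycle.refl ρ (cst i)
    | succ k IHk =>
      have h1' : (ρt ^ (k + 1)) i = ρt ((ρt ^ k) i) := by
        rw [pow_succ']; rfl
      rw [h1']
      refine IHk.trans ⟨(sret ((ρt ^ k) i) : ℤ), ?_⟩
      rw [zpow_natCast]
      exact (hρt _).symm
  have M : ∀ i j : Fin N, ρt.SameCycle i j → ρ.SameCycle (cst i) (cst j) := by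
    intro i j h
    obtain ⟨k, -, hk⟩ := h.exists_pow_eq'
    rw [← hk]
    exact M0 k i
  -- every element lands in the cycle of some element of A
  have hA : ∀ x : Fin s, ρ.SameCycle (cst (horb x).choose) x := by
    intro x
    obtain ⟨m, hm⟩ := (horb x).choose_spec
    exact ⟨(m : ℤ), by rw [zpow_natCast]; exact hm⟩
  -- bijection between cycle classes
  let F : Quotient (sfrScs ρ) → Quotient (sfrScs ρt) :=
    Quotient.lift (fun x => Quotient.mk (sfrScs ρt) (horb x).choose)
      (fun x y hxy => Quotient.sound (L' _ _ (((hA x).trans hxy).trans (hA y).symm)))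
  let G : Quotient (sfrScs ρt) → Quotient (sfrScs ρ) :=
    Quotient.lift (fun i => Quotient.mk (sfrScs ρ) (cst i))
      (fun i j hij => Quotient.sound (M i j hij))
  have hGF : ∀ q, G (F q) = q := by
    refine Quotient.ind ?_
    intro x
    exact Quotient.sound (hA x)
  have hFG : ∀ q, F (G q) = q := by
    refine Quotient.ind ?_
    intro i
    exact Quotient.sound (L' _ _ (hA (cst i)))
  have hcardQ : Nat.card (Quotient (sfrScs ρ)) = Nat.card (Quotient (sfrScs ρt)) :=
    Nat.card_congr ⟨F, G, hGF, hFG⟩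
  -- conclude via the sign-vs-cycle-count formula
  rw [sfr_sign_eq ρ, sfr_sign_eq ρt, hcardQ, Fintype.card_fin, Fintype.card_fin, ← pow_add]
  congr 1
  omega
end

section
/- Let k be a field, V a k-vector space of finite dimension n with basis e_1, …, e_n, and f : V → V a linear endomorphism with matrix M (so f(e_j) = Σ_i M_{ij} e_i). For every 0 ≤ t ≤ n, the trace of the induced endomorphism Λ^t f of the t-th exterior power Λ^t V equals the sum of the principal t×t minors of M: tr(Λ^t f) = Σ_{B ⊆ {1,…,n}, |B| = t} det(M_{B×B}) = Σ_{B, |B|=t} Σ_{τ ∈ 𝔖_B} sgn(τ) ∏_{b ∈ B} M_{τ(b), b}, where M_{B×B} denotes the submatrix of M with rows and columns indexed by B. -/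
/-!
STATEMENT 9: for an endomorphism `f` of an `n`-dimensional vector space with basis
`e₁, …, eₙ` and matrix `M` (so `f eⱼ = Σᵢ Mᵢⱼ eᵢ`), and `0 ≤ t ≤ n`, the trace of the
induced endomorphism `Λᵗ f` of `Λᵗ V` is the sum of the principal t×t minors of `M`,
which in turn equals `Σ_{|B| = t} Σ_{τ ∈ 𝔖_B} sgn(τ) ∏_{b ∈ B} M_{τ(b), b}`.
`Λᵗ V` is realized as the submodule `⋀[k]^t V` of the exterior algebra, and `Λᵗ f` as any
endomorphism `F` of it compatible with `ExteriorAlgebra.map f` (this determines `F`, since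
`ExteriorAlgebra.map f` sends `v₁ ∧ ⋯ ∧ v_t` to `f v₁ ∧ ⋯ ∧ f v_t`).
-/

open ExteriorAlgebra

namespace TraceExtAux

variable {k V : Type*} [Field k] [AddCommGroup V] [Module k V]
variable {n : ℕ} (e : Module.Basis (Fin n) k V) (t : ℕ)

/-- The strictly increasing enumeration of a `t`-element subset of `Fin n`. -/
noncomputable def sig (B : {s : Finset (Fin n) // s.card = t}) : Fin t → Fin n :=
  fun i => (Finset.orderIsoOfFin B.1 B.2 i : Fin n)

lemma sig_injective (B : {s : Finset (Fin n) // s.card = t}) :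
    Function.Injective (sig t B) :=
  Subtype.val_injective.comp (Finset.orderIsoOfFin B.1 B.2).injective

lemma sig_mem (B : {s : Finset (Fin n) // s.card = t}) (i : Fin t) : sig t B i ∈ B.1 :=
  (Finset.orderIsoOfFin B.1 B.2 i).2

/-- The basis wedge products. -/
noncomputable def xB (B : {s : Finset (Fin n) // s.card = t}) : ExteriorAlgebra k V :=
  ιMulti k t (fun i => e (sig t B i))

/-- The dual alternating form picking out the coefficient of `xB`. -/
noncomputable def AB (B : {s : Finset (Fin n) // s.card = t}) : V [⋀^Fin t]→ₗ[k] k :=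
  (Matrix.detRowAlternating).compLinearMap (LinearMap.pi fun i => e.coord (sig t B i))

lemma AB_apply (B : {s : Finset (Fin n) // s.card = t}) (v : Fin t → V) :
    AB e t B v = Matrix.det (Matrix.of fun i j => e.coord (sig t B j) (v i)) := rfl

lemma AB_on_basis (B C : {s : Finset (Fin n) // s.card = t}) :
    AB e t B (fun i => e (sig t C i)) = if B = C then 1 else 0 := by
  classical
  rw [AB_apply]
  by_cases h : B = C
  · subst h
    simp only [if_pos rfl]
    have : (Matrix.of fun i j => e.coord (sig t B j) (e (sig t B i))) =
        (1 : Matrix (Fin t) (Fin t) k) := by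
      ext i j
      simp only [Matrix.of_apply, Module.Basis.coord_apply, Module.Basis.repr_self, Matrix.one_apply,
        Finsupp.single_apply]
      by_cases hij : i = j
      · simp [hij]
      · rw [if_neg (fun hc => hij (sig_injective t B hc)), if_neg hij]
    rw [this, Matrix.det_one, if_pos trivial]
  · rw [if_neg h]
    obtain ⟨a, haB, haC⟩ : ∃ a ∈ B.1, a ∉ C.1 := by
      by_contra hc
      push_neg at hc
      exact h (Subtype.ext (Finset.eq_of_subset_of_card_le hc (by rw [B.2, C.2])))
    set j₀ : Fin t := (Finset.orderIsoOfFin B.1 B.2).symm ⟨a, haB⟩ with hj₀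
    apply Matrix.det_eq_zero_of_column_eq_zero j₀
    intro i
    have hBj₀ : sig t B j₀ = a := by
      simp only [sig, hj₀, OrderIso.apply_symm_apply]
    simp only [Matrix.of_apply, Module.Basis.coord_apply, Module.Basis.repr_self, Finsupp.single_apply]
    rw [if_neg]
    intro hc
    apply haC
    rw [← hBj₀, ← hc]
    exact sig_mem t C i

/-- The dual linear functional on the exterior algebra. -/
noncomputable def lamB (B : {s : Finset (Fin n) // s.card = t}) :
    ExteriorAlgebra k V →ₗ[k] k :=
  liftAlternating (Function.update (fun i => (0 : V [⋀^Fin i]→ₗ[k] k)) t (AB e t B))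

lemma lamB_ιMulti (B : {s : Finset (Fin n) // s.card = t}) (v : Fin t → V) :
    lamB e t B (ιMulti k t v) = AB e t B v := by
  rw [lamB, liftAlternating_apply_ιMulti, Function.update_self]

lemma lamB_xB (B C : {s : Finset (Fin n) // s.card = t}) :
    lamB e t B (xB e t C) = if B = C then 1 else 0 := by
  rw [xB, lamB_ιMulti, AB_on_basis]

lemma xB_mem (B : {s : Finset (Fin n) // s.card = t}) : xB e t B ∈ ⋀[k]^t V :=
  ιMulti_range k t ⟨_, rfl⟩

lemma linIndep : LinearIndependent k (xB e t) := by
  classical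
  rw [Fintype.linearIndependent_iff]
  intro c hc C
  have := congrArg (lamB e t C) hc
  rw [map_sum, map_zero] at this
  simp only [map_smul, lamB_xB, smul_eq_mul, mul_ite, mul_one, mul_zero] at this
  rwa [Finset.sum_ite_eq (Finset.univ) C c, if_pos (Finset.mem_univ C)] at this

lemma mem_span_xB (r : Fin t → Fin n) :
    ιMulti k t (fun j => e (r j)) ∈ Submodule.span k (Set.range (xB e t)) := by
  classical
  by_cases hr : Function.Injective r
  · set B : {s : Finset (Fin n) // s.card = t} :=
      ⟨Finset.image r Finset.univ, by
        rw [Finset.card_image_of_injective _ hr, Finset.card_univ, Fintype.card_fin]⟩ with hB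
    have hmem : ∀ j, r j ∈ B.1 := fun j => Finset.mem_image_of_mem r (Finset.mem_univ j)
    set ρ : Fin t → ↥B.1 := fun j => ⟨r j, hmem j⟩ with hρ
    have hρinj : Function.Injective ρ := fun a b hab => hr (congrArg Subtype.val hab)
    have hρbij : Function.Bijective ρ := by
      rw [Fintype.bijective_iff_injective_and_card]
      refine ⟨hρinj, ?_⟩
      rw [Fintype.card_coe, B.2, Fintype.card_fin]
    set π : Equiv.Perm (Fin t) :=
      (Equiv.ofBijective ρ hρbij).trans (Finset.orderIsoOfFin B.1 B.2).toEquiv.symm with hπ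
    have hcomp : (fun j => e (r j)) = (fun i => e (sig t B i)) ∘ π := by
      funext j
      simp only [Function.comp_apply, sig, hπ, Equiv.trans_apply]
      congr 1
      have : (Finset.orderIsoOfFin B.1 B.2) ((Finset.orderIsoOfFin B.1 B.2).toEquiv.symm
          (Equiv.ofBijective ρ hρbij j)) = ρ j := by
        exact (Finset.orderIsoOfFin B.1 B.2).apply_symm_apply _
      rw [this]
    rw [hcomp, AlternatingMap.map_perm]
    rw [Units.smul_def]
    exact (Submodule.span k (Set.range (xB e t))).toAddSubgroup.zsmul_mem
      (Submodule.subset_span ⟨B, rfl⟩) _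
  · rw [AlternatingMap.map_eq_zero_of_not_injective _ _ (fun hc => hr (fun a b hab =>
      hc (congrArg e hab)))]
    exact Submodule.zero_mem _

lemma span_xB : Submodule.span k (Set.range (xB e t)) = ⋀[k]^t V := by
  classical
  refine le_antisymm (Submodule.span_le.2 ?_) ?_
  · rintro _ ⟨B, rfl⟩
    exact xB_mem e t B
  · rw [← ιMulti_span_fixedDegree]
    rw [Submodule.span_le]
    rintro _ ⟨v, rfl⟩
    have hv : (ιMulti k t).toMultilinearMap v =
        (ιMulti k t).toMultilinearMap (fun j => ∑ i : Fin n, e.repr (v j) i • e i) :=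
      congrArg _ (funext fun j => (e.sum_repr (v j)).symm)
    rw [show (ιMulti k t) v = (ιMulti k t).toMultilinearMap v from rfl, hv,
      MultilinearMap.map_sum]
    apply Submodule.sum_mem
    intro r _
    have : (ιMulti k t).toMultilinearMap (fun j => e.repr (v j) (r j) • e (r j)) =
        (∏ j, e.repr (v j) (r j)) • (ιMulti k t).toMultilinearMap (fun j => e (r j)) :=
      MultilinearMap.map_smul_univ _ _ _
    rw [this]
    exact Submodule.smul_mem _ _ (mem_span_xB e t r)

/-- The subtype-valued family. -/
noncomputable def yB (B : {s : Finset (Fin n) // s.card = t}) : ⋀[k]^t V :=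
  ⟨xB e t B, xB_mem e t B⟩

noncomputable def bB : Module.Basis {s : Finset (Fin n) // s.card = t} k (⋀[k]^t V) := by
  refine Module.Basis.mk (v := yB e t) ?_ ?_
  · apply LinearIndependent.of_comp (Submodule.subtype _)
    exact linIndep e t
  · rw [← Submodule.map_le_map_iff_of_injective (Submodule.injective_subtype (⋀[k]^t V))]
    rw [Submodule.map_top, Submodule.range_subtype, Submodule.map_span]
    rw [← Set.range_comp]
    have : (Submodule.subtype (⋀[k]^t V)) ∘ yB e t = xB e t := rfl
    rw [this, span_xB]

lemma bB_apply (B : {s : Finset (Fin n) // s.card = t}) : bB e t B = yB e t B :=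
  Module.Basis.mk_apply _ _ _

/-- The coordinate functionals of `bB` are the `lamB`. -/
lemma repr_eq_lam (z : ⋀[k]^t V) (C : {s : Finset (Fin n) // s.card = t}) :
    (bB e t).repr z C = lamB e t C (z : ExteriorAlgebra k V) := by
  classical
  have : (bB e t).coord C = (lamB e t C).comp (Submodule.subtype (⋀[k]^t V)) := by
    apply Module.Basis.ext (bB e t)
    intro B
    rw [LinearMap.comp_apply, Module.Basis.coord_apply, Module.Basis.repr_self, bB_apply]
    simp only [Submodule.subtype_apply, yB, lamB_xB, Finsupp.single_apply]
    by_cases h : B = C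
    · subst h; simp
    · rw [if_neg h, if_neg (fun hc => h hc.symm)]
  have := congrArg (fun g => g z) this
  simpa [Module.Basis.coord_apply] using this

end TraceExtAux

theorem trace_exteriorPower_eq_sum_principal_minors
    {k V : Type*} [Field k] [AddCommGroup V] [Module k V]
    (n : ℕ) (e : Module.Basis (Fin n) k V)
    (f : V →ₗ[k] V) (M : Matrix (Fin n) (Fin n) k)
    (hM : ∀ j, f (e j) = ∑ i : Fin n, M i j • e i)
    (t : ℕ) (ht : t ≤ n)
    (F : ⋀[k]^t V →ₗ[k] ⋀[k]^t V)
    (hF : ∀ x : ⋀[k]^t V,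
      (F x : ExteriorAlgebra k V) = ExteriorAlgebra.map f (x : ExteriorAlgebra k V)) :
    LinearMap.trace k (⋀[k]^t V) F =
      ∑ B ∈ Finset.powersetCard t (Finset.univ : Finset (Fin n)),
        (M.submatrix (fun i : ↥B => (i : Fin n)) (fun i : ↥B => (i : Fin n))).det ∧
    LinearMap.trace k (⋀[k]^t V) F =
      ∑ B ∈ Finset.powersetCard t (Finset.univ : Finset (Fin n)),
        ∑ τ : Equiv.Perm ↥B, ((Equiv.Perm.sign τ : ℤ) : k) *
          ∏ b : ↥B, M (τ b) b := by
  classical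
  have hcoord : ∀ l m : Fin n, e.coord l (f (e m)) = M l m := by
    intro l m
    rw [hM]
    simp [Module.Basis.coord_apply, map_sum, Finsupp.single_apply]
  have htr : LinearMap.trace k (⋀[k]^t V) F =
      ∑ B : {s : Finset (Fin n) // s.card = t},
        (TraceExtAux.bB e t).repr (F (TraceExtAux.bB e t B)) B := by
    rw [LinearMap.trace_eq_matrix_trace k (TraceExtAux.bB e t) F, Matrix.trace]
    congr 1
    funext B
    rw [Matrix.diag_apply, LinearMap.toMatrix_apply]
  have hdiag : ∀ B : {s : Finset (Fin n) // s.card = t},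
      (TraceExtAux.bB e t).repr (F (TraceExtAux.bB e t B)) B =
      (M.submatrix (fun i : ↥B.1 => (i : Fin n)) (fun i : ↥B.1 => (i : Fin n))).det := by
    intro B
    rw [TraceExtAux.repr_eq_lam, hF, TraceExtAux.bB_apply]
    have h1 : ((TraceExtAux.yB e t B : ⋀[k]^t V) : ExteriorAlgebra k V) =
        ιMulti k t (fun i => e (TraceExtAux.sig t B i)) := rfl
    rw [h1, map_apply_ιMulti, TraceExtAux.lamB_ιMulti, TraceExtAux.AB_apply]
    have h2 : (Matrix.of fun i j => (e.coord (TraceExtAux.sig t B j))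
        ((f ∘ fun i => e (TraceExtAux.sig t B i)) i)) =
        (Matrix.of fun i j : Fin t => M (TraceExtAux.sig t B i) (TraceExtAux.sig t B j)).transpose := by
      ext i j
      simp [Matrix.transpose_apply, hcoord]
    rw [h2, Matrix.det_transpose]
    have h3 : (Matrix.of fun i j : Fin t => M (TraceExtAux.sig t B i) (TraceExtAux.sig t B j)) =
        (M.submatrix (fun i : ↥B.1 => (i : Fin n)) (fun i : ↥B.1 => (i : Fin n))).submatrix
          (Finset.orderIsoOfFin B.1 B.2).toEquiv (Finset.orderIsoOfFin B.1 B.2).toEquiv := by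
      ext i j
      rfl
    rw [h3, Matrix.det_submatrix_equiv_self]
  have hsum : ∀ g : Finset (Fin n) → k,
      (∑ B : {s : Finset (Fin n) // s.card = t}, g B.1) =
      ∑ B ∈ Finset.powersetCard t (Finset.univ : Finset (Fin n)), g B := by
    intro g
    exact (Finset.sum_subtype (Finset.powersetCard t Finset.univ)
      (fun B => by simp [Finset.mem_powersetCard_univ]) g).symm
  have key : LinearMap.trace k (⋀[k]^t V) F =
      ∑ B ∈ Finset.powersetCard t (Finset.univ : Finset (Fin n)),
        (M.submatrix (fun i : ↥B => (i : Fin n)) (fun i : ↥B => (i : Fin n))).det := by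
    rw [htr]
    simp_rw [hdiag]
    exact hsum (fun B => (M.submatrix (fun i : ↥B => (i : Fin n))
      (fun i : ↥B => (i : Fin n))).det)
  refine ⟨key, ?_⟩
  rw [key]
  apply Finset.sum_congr rfl
  intro B _
  rw [Matrix.det_apply']
  apply Finset.sum_congr rfl
  intro τ _
  simp [Matrix.submatrix_apply]
end
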